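/- For n a positive even integer, the number of positive integer pairs (A, B) with 2A + 4B = n and A < √2 · B equals ⌊n/(4+4√2)⌋ if n ≡ 0 (mod 4), and ⌊(n+2+2√2)/(4+4√2)⌋ if n ≡ 2 (mod 4). -/

import Mathlib

private lemma aux_floor (x y : ℝ) (M : ℕ) (hx0 : 0 ≤ x) (hy0 : 0 ≤ y)
    (hxi : Irrational x) (hsum : x + y = (M : ℝ) + 1) :
    M + 1 - (⌊x⌋₊ + 1) = ⌊y⌋₊ := by
  have hfx : (0:ℤ) ≤ ⌊x⌋ := Int.floor_nonneg.mpr hx0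
  have hfy0 : (0:ℤ) ≤ ⌊y⌋ := Int.floor_nonneg.mpr hy0
  have hceil : ⌈x⌉ = ⌊x⌋ + 1 := by
    refine le_antisymm (Int.ceil_le_floor_add_one x) ?_
    have h1 : (⌊x⌋:ℝ) < x := lt_of_le_of_ne (Int.floor_le x)
      (fun h => hxi.ne_int ⌊x⌋ h.symm)
    have h2 : (⌊x⌋:ℝ) < (⌈x⌉:ℝ) := lt_of_lt_of_le h1 (Int.le_ceil x)
    exact Int.add_one_le_iff.mpr (by exact_mod_cast h2)
  have hyx : y = -x + ((M + 1 : ℤ) : ℝ) := by push_cast; linarith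
  have hfy : ⌊y⌋ = (M:ℤ) - ⌊x⌋ := by
    rw [hyx, Int.floor_add_intCast, Int.floor_neg, hceil]; ring
  have hKx : ⌊x⌋₊ = ⌊x⌋.toNat := (Int.floor_toNat x).symm
  have hKy : ⌊y⌋₊ = ⌊y⌋.toNat := (Int.floor_toNat y).symm
  omega

open scoped Classical in
theorem count_four_cycle_fixed (n : ℕ) (hn : 0 < n) (he : 2 ∣ n) :
    ((Finset.Icc 1 n ×ˢ Finset.Icc 1 n).filter
        (fun p : ℕ × ℕ =>
          2 * p.1 + 4 * p.2 = n ∧ (p.1 : ℝ) < Real.sqrt 2 * p.2)).card =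
      if n % 4 = 0 then ⌊(n : ℝ) / (4 + 4 * Real.sqrt 2)⌋₊
      else ⌊((n : ℝ) + 2 + 2 * Real.sqrt 2) / (4 + 4 * Real.sqrt 2)⌋₊ := by
  set s := Real.sqrt 2 with hs
  have hs0 : 0 < s := Real.sqrt_pos.mpr (by norm_num)
  have hs2 : s * s = 2 := Real.mul_self_sqrt (by norm_num)
  have hirr : Irrational s := irrational_sqrt_two
  have hd : (0:ℝ) < 4 + 2 * s := by positivity
  have hd4 : (0:ℝ) < 4 + 4 * s := by positivity
  set x : ℝ := (n : ℝ) / (4 + 2 * s) with hx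
  have hx0 : 0 ≤ x := by positivity
  set K := ⌊x⌋₊ with hK
  set M := (n - 2) / 4 with hM
  have hirrx : Irrational x := by
    have h2 : Irrational (4 + 2 * s) := by
      have := (hirr.natCast_mul (m := 2) (by norm_num)).natCast_add 4
      simpa using this
    have := h2.natCast_div (m := n) hn.ne'
    simpa [hx] using this
  have hcard : ((Finset.Icc 1 n ×ˢ Finset.Icc 1 n).filter
        (fun p : ℕ × ℕ =>
          2 * p.1 + 4 * p.2 = n ∧ (p.1 : ℝ) < s * p.2)).card = M + 1 - (K + 1) := by
    rw [← Nat.card_Icc (K+1) M]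
    apply Finset.card_bij' (fun p _ => p.2) (fun B _ => (n / 2 - 2 * B, B))
    · intro p hp
      simp only [Finset.mem_filter, Finset.mem_product, Finset.mem_Icc] at hp
      obtain ⟨⟨⟨h11, h12⟩, h21, h22⟩, heq, hlt⟩ := hp
      rw [Finset.mem_Icc]
      constructor
      · have hnr : (n:ℝ) = 2 * p.1 + 4 * p.2 := by exact_mod_cast heq.symm
        have hxlt : x < (p.2 : ℝ) := by
          rw [hx, div_lt_iff₀ hd]
          nlinarith
        have hKlt : (K:ℝ) < (p.2:ℝ) := lt_of_le_of_lt (Nat.floor_le hx0) hxlt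
        have : K < p.2 := by exact_mod_cast hKlt
        omega
      · omega
    · intro B hB
      rw [Finset.mem_Icc] at hB
      obtain ⟨hB1, hB2⟩ := hB
      have hA : 2 * (n / 2 - 2 * B) + 4 * B = n := by omega
      simp only [Finset.mem_filter, Finset.mem_product, Finset.mem_Icc]
      refine ⟨⟨⟨by omega, by omega⟩, by omega, by omega⟩, hA, ?_⟩
      have hxB : x < (B:ℝ) := lt_of_lt_of_le (Nat.lt_floor_add_one x)
        (by exact_mod_cast hB1)
      rw [hx, div_lt_iff₀ hd] at hxB
      have hnr : 2 * ((n / 2 - 2 * B : ℕ):ℝ) + 4 * (B:ℝ) = (n:ℝ) := by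
        exact_mod_cast hA
      nlinarith
    · intro p hp
      simp only [Finset.mem_filter, Finset.mem_product, Finset.mem_Icc] at hp
      obtain ⟨⟨⟨h11, h12⟩, h21, h22⟩, heq, hlt⟩ := hp
      have : n / 2 - 2 * p.2 = p.1 := by omega
      exact Prod.ext this rfl
    · intro B hB
      rfl
  rw [hcard]
  have h4 : n % 4 = 0 ∨ n % 4 = 2 := by omega
  rcases h4 with h4 | h4
  · rw [if_pos h4]
    have hn4 : (n:ℝ) = 4 * ((M:ℝ) + 1) := by
      have : n = 4 * (M + 1) := by omega
      exact_mod_cast this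
    refine aux_floor x _ M hx0 (by positivity) hirrx ?_
    rw [hx, hn4]
    field_simp
    ring_nf
    nlinarith [hs2, hs0]
  · rw [if_neg (by omega)]
    have hn4 : (n:ℝ) = 4 * (M:ℝ) + 2 := by
      have : n = 4 * M + 2 := by omega
      exact_mod_cast this
    refine aux_floor x _ M hx0 (by positivity) hirrx ?_
    rw [hx, hn4]
    field_simp
    ring_nf
    nlinarith [hs2, hs0]
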